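/- arXiv:2106.14098 — 5 statements merged into one kernel-verified Lean document; each statement's English description precedes it below -/
import Mathlib

section
/- For every real number s and every ε > 0 there exists a piecewise C¹ curve γ : [0,1] → 𝓗 with γ(0) = (0,0,0), γ(1) = (0,0,s), and σ-length ℓ_σ(γ) < ε. Consequently the geodesic distance of the left-invariant weak Riemannian metric σ satisfies d((0,0,0),(0,0,s)) = 0 for every s ∈ ℝ. -/
open scoped RealInnerProductSpace
open Real

noncomputable section

abbrev l2 : Type := lp (fun _ : ℕ => ℝ) 2

abbrev Hei : Type := l2 × l2 × ℝ

/-- The group operation of the infinite dimensional Heisenberg group. -/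
def hMul (p q : Hei) : Hei :=
  (p.1 + q.1, p.2.1 + q.2.1, p.2.2 + q.2.2 + ⟪p.1, q.2.1⟫ - ⟪p.2.1, q.1⟫)

/-- The square of the weak norm `‖u‖_η`. -/
def etaSq (u : l2) : ℝ := ∑' k : ℕ, (u k)^2 / ((k : ℝ) + 1)

/-- The square of the weak Riemannian norm `‖v‖_{σ,p}`. -/
def sigmaSq (p v : Hei) : ℝ :=
  etaSq v.1 + etaSq v.2.1 + (v.2.2 - ⟪p.1, v.2.1⟫ + ⟪p.2.1, v.1⟫)^2

def PiecewiseC1 (γ : ℝ → Hei) : Prop :=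
  ContinuousOn γ (Set.Icc 0 1) ∧
  ∃ S : Finset ℝ, ∀ t ∈ Set.Icc (0:ℝ) 1, t ∉ S →
    DifferentiableAt ℝ γ t ∧ ContinuousAt (deriv γ) t

def Horizontal (γ : ℝ → Hei) : Prop :=
  ∀ t ∈ Set.Icc (0:ℝ) 1, DifferentiableAt ℝ γ t →
    deriv (fun s => (γ s).2.2) t
      = ⟪(γ t).1, deriv (fun s => (γ s).2.1) t⟫
        - ⟪(γ t).2.1, deriv (fun s => (γ s).1) t⟫

def lenSigma (γ : ℝ → Hei) : ℝ :=
  ∫ t in (0:ℝ)..1, Real.sqrt (sigmaSq (γ t) (deriv γ t))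

def lenG (γ : ℝ → Hei) : ℝ :=
  ∫ t in (0:ℝ)..1,
    Real.sqrt (etaSq (deriv (fun s => (γ s).1) t) + etaSq (deriv (fun s => (γ s).2.1) t))

def dSigma (p q : Hei) : ℝ :=
  sInf {L | ∃ γ : ℝ → Hei, PiecewiseC1 γ ∧ γ 0 = p ∧ γ 1 = q ∧ lenSigma γ = L}

def rho (p q : Hei) : ℝ :=
  sInf {L | ∃ γ : ℝ → Hei, PiecewiseC1 γ ∧ Horizontal γ ∧ γ 0 = p ∧ γ 1 = q ∧ lenG γ = L}

def sigma0 (v w : Hei) : ℝ :=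
  (∑' k : ℕ, ((v.1 k) * (w.1 k) + (v.2.1 k) * (w.2.1 k)) / ((k : ℝ) + 1)) + v.2.2 * w.2.2

def bracket (X Y : Hei) : Hei := (0, 0, 2 * (⟪X.1, Y.2.1⟫ - ⟪X.2.1, Y.1⟫))

/-- `eVec n` is the `(n+1)`-th standard basis vector of `ℓ²`. -/
def eVec (n : ℕ) : l2 := lp.single 2 n 1

def e3 : Hei := (0, 0, 1)

/-! ### Auxiliary material -/

lemma etaSq_smul_eVec (n : ℕ) (a : ℝ) : etaSq (a • eVec n) = a^2 / ((n : ℝ) + 1) := by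
  unfold etaSq
  rw [tsum_eq_single n]
  · simp [eVec, lp.coeFn_smul, lp.single_apply_self]
  · intro k hk
    simp [eVec, lp.coeFn_smul, lp.single_apply, hk]

lemma inner_eVec_self (n : ℕ) : ⟪eVec n, eVec n⟫ = (1 : ℝ) := by
  rw [eVec, lp.inner_single_left]
  simp [eVec, lp.single_apply_self]

lemma inner_smul_eVec (n : ℕ) (a b : ℝ) : ⟪a • eVec n, b • eVec n⟫ = a * b := by
  rw [real_inner_smul_left, real_inner_smul_right, inner_eVec_self]; ring

lemma hasDerivAt_two_pi_mul (t : ℝ) : HasDerivAt (fun u : ℝ => 2*π*u) (2*π) t := by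
  simpa using (hasDerivAt_id t).const_mul (2*π)

def XX (r t : ℝ) : ℝ := r * (Real.cos (2*π*t) - 1)
def YY (c r t : ℝ) : ℝ := c * r * Real.sin (2*π*t)
def ZZ (c r t : ℝ) : ℝ := c * r^2 * (2*π*t - Real.sin (2*π*t))
def XX' (r t : ℝ) : ℝ := r * (-Real.sin (2*π*t) * (2*π))
def YY' (c r t : ℝ) : ℝ := c * r * (Real.cos (2*π*t) * (2*π))
def ZZ' (c r t : ℝ) : ℝ := c * r^2 * (2*π - Real.cos (2*π*t) * (2*π))

lemma hasDerivAt_XX (r t : ℝ) : HasDerivAt (fun u => XX r u) (XX' r t) t :=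
  (((hasDerivAt_two_pi_mul t).cos).sub_const 1).const_mul r

lemma hasDerivAt_YY (c r t : ℝ) : HasDerivAt (fun u => YY c r u) (YY' c r t) t :=
  ((hasDerivAt_two_pi_mul t).sin).const_mul (c * r)

lemma hasDerivAt_ZZ (c r t : ℝ) : HasDerivAt (fun u => ZZ c r u) (ZZ' c r t) t :=
  ((hasDerivAt_two_pi_mul t).sub ((hasDerivAt_two_pi_mul t).sin)).const_mul (c * r^2)

def curve (n : ℕ) (c r : ℝ) (t : ℝ) : Hei :=
  (XX r t • eVec n, YY c r t • eVec n, ZZ c r t)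

lemma hasDerivAt_curve (n : ℕ) (c r t : ℝ) :
    HasDerivAt (curve n c r)
      ((XX' r t • eVec n, YY' c r t • eVec n, ZZ' c r t) : Hei) t :=
  HasDerivAt.prodMk ((hasDerivAt_XX r t).smul_const (eVec n))
    (HasDerivAt.prodMk ((hasDerivAt_YY c r t).smul_const (eVec n)) (hasDerivAt_ZZ c r t))

lemma deriv_curve (n : ℕ) (c r : ℝ) :
    deriv (curve n c r)
      = fun t => ((XX' r t • eVec n, YY' c r t • eVec n, ZZ' c r t) : Hei) :=
  funext fun t => (hasDerivAt_curve n c r t).deriv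

lemma sigma_curve (n : ℕ) (c r t : ℝ) (hc : c^2 = 1) :
    sigmaSq (curve n c r t) ((XX' r t • eVec n, YY' c r t • eVec n, ZZ' c r t) : Hei)
      = (2*π*r)^2 / ((n : ℝ) + 1) := by
  have hpy := Real.sin_sq_add_cos_sq (2*π*t)
  have h1 : ZZ' c r t - XX r t * YY' c r t + YY c r t * XX' r t = 0 := by
    unfold XX YY XX' YY' ZZ'
    linear_combination (-(c*r^2*(2*π))) * hpy
  have h2 : XX' r t ^ 2 + YY' c r t ^ 2 = (2*π*r)^2 := by
    unfold XX' YY'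
    linear_combination (r^2*(2*π)^2) * hpy + (r^2*(2*π)^2 * Real.cos (2*π*t)^2) * hc
  have hn : ((n : ℝ) + 1) ≠ 0 := by positivity
  unfold sigmaSq curve
  simp only [etaSq_smul_eVec, inner_smul_eVec]
  rw [show ZZ' c r t - XX r t * YY' c r t + YY c r t * XX' r t = 0 from h1]
  field_simp
  linarith [h2]

lemma continuous_deriv_curve (n : ℕ) (c r : ℝ) :
    Continuous (deriv (curve n c r)) := by
  rw [deriv_curve]
  refine Continuous.prodMk ?_ (Continuous.prodMk ?_ ?_)
  · exact Continuous.smul (f := fun t => XX' r t) (by unfold XX'; fun_prop) continuous_const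
  · exact Continuous.smul (f := fun t => YY' c r t) (by unfold YY'; fun_prop) continuous_const
  · unfold ZZ'; fun_prop

lemma exists_short (s : ℝ) (ε : ℝ) (hε : 0 < ε) :
    ∃ γ : ℝ → Hei, PiecewiseC1 γ ∧
      γ 0 = ((0, 0, 0) : Hei) ∧ γ 1 = ((0, 0, s) : Hei) ∧ lenSigma γ < ε := by
  set r : ℝ := Real.sqrt (|s| / (2*π)) with hr
  set c : ℝ := if 0 ≤ s then (1:ℝ) else -1 with hcdef
  have hπ : (0:ℝ) < π := Real.pi_pos
  have hc : c^2 = 1 := by by_cases h : 0 ≤ s <;> simp [hcdef, h]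
  have hrsq : 2*π*r^2 = |s| := by
    rw [hr, Real.sq_sqrt (by positivity)]
    field_simp
  have hcs : c * |s| = s := by
    by_cases h : 0 ≤ s
    · simp [hcdef, h, abs_of_nonneg h]
    · simp [hcdef, h, abs_of_neg (lt_of_not_ge h)]
  obtain ⟨n, hn⟩ := exists_nat_gt ((2*π*r)^2 / ε^2)
  refine ⟨curve n c r, ⟨?_, ∅, fun t _ _ => ⟨(hasDerivAt_curve n c r t).differentiableAt,
      (continuous_deriv_curve n c r).continuousAt⟩⟩, ?_, ?_, ?_⟩
  · exact Continuous.continuousOn (by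
      refine Continuous.prodMk ?_ (Continuous.prodMk ?_ ?_)
      · exact Continuous.smul (f := fun t => XX r t) (by unfold XX; fun_prop) continuous_const
      · exact Continuous.smul (f := fun t => YY c r t) (by unfold YY; fun_prop) continuous_const
      · unfold ZZ; fun_prop)
  · simp [curve, XX, YY, ZZ]
  · have h3 : ZZ c r 1 = s := by
      unfold ZZ
      simp only [mul_one, Real.sin_two_pi]
      linear_combination c * hrsq + hcs
    have h1 : XX r 1 = 0 := by unfold XX; simp [Real.cos_two_pi]
    have h2 : YY c r 1 = 0 := by unfold YY; simp [Real.sin_two_pi]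
    simp [curve, h1, h2, h3]
  · have hcalc : lenSigma (curve n c r) = Real.sqrt ((2*π*r)^2 / ((n:ℝ)+1)) := by
      unfold lenSigma
      rw [deriv_curve]
      simp only [sigma_curve n c r _ hc]
      simp
    rw [hcalc, show ε = Real.sqrt (ε^2) from (Real.sqrt_sq hε.le).symm]
    apply Real.sqrt_lt_sqrt (by positivity)
    rw [div_lt_iff₀ (by positivity)]
    rw [div_lt_iff₀ (by positivity)] at hn
    nlinarith [sq_nonneg ε, hε]

lemma lenSigma_nonneg (γ : ℝ → Hei) : 0 ≤ lenSigma γ :=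
  intervalIntegral.integral_nonneg zero_le_one (fun u _ => Real.sqrt_nonneg _)

/-- For every real `s` and `ε > 0` there is a piecewise `C¹` curve from the origin
to `(0,0,s)` of `σ`-length less than `ε`; consequently `d((0,0,0),(0,0,s)) = 0`. -/
theorem statement0 :
    (∀ s : ℝ, ∀ ε > 0, ∃ γ : ℝ → Hei, PiecewiseC1 γ ∧
      γ 0 = ((0, 0, 0) : Hei) ∧ γ 1 = ((0, 0, s) : Hei) ∧ lenSigma γ < ε) ∧
    (∀ s : ℝ, dSigma ((0, 0, 0) : Hei) ((0, 0, s) : Hei) = 0) := by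
  refine ⟨fun s ε hε => exists_short s ε hε, fun s => ?_⟩
  have hbdd : BddBelow {L | ∃ γ : ℝ → Hei, PiecewiseC1 γ ∧ γ 0 = ((0,0,0) : Hei) ∧
      γ 1 = ((0,0,s) : Hei) ∧ lenSigma γ = L} := by
    refine ⟨0, fun L hL => ?_⟩
    obtain ⟨γ, _, _, _, hlen⟩ := hL
    exact hlen ▸ lenSigma_nonneg γ
  have hne : ∀ ε > 0, ∃ L ∈ {L | ∃ γ : ℝ → Hei, PiecewiseC1 γ ∧ γ 0 = ((0,0,0) : Hei) ∧
      γ 1 = ((0,0,s) : Hei) ∧ lenSigma γ = L}, L < ε := by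
    intro ε hε
    obtain ⟨γ, h1, h2, h3, h4⟩ := exists_short s ε hε
    exact ⟨lenSigma γ, ⟨γ, h1, h2, h3, rfl⟩, h4⟩
  refine le_antisymm ?_ ?_
  · by_contra h
    push_neg at h
    obtain ⟨L, hL, hLlt⟩ := hne _ h
    exact absurd (csInf_le hbdd hL) (not_le.mpr hLlt)
  · obtain ⟨L, hL, _⟩ := hne 1 one_pos
    refine le_csInf ⟨L, hL⟩ (fun b hb => ?_)
    obtain ⟨γ, _, _, _, hlen⟩ := hb
    exact hlen ▸ lenSigma_nonneg γ

end
end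

section
/- For every p₁, p₂ ∈ ℓ² and all s₁, s₂ ∈ ℝ, the Riemannian geodesic distance of the left-invariant weak Riemannian metric σ on the infinite-dimensional Heisenberg group vanishes between the points (p₁,p₂,s₁) and (p₁,p₂,s₂): d((p₁,p₂,s₁),(p₁,p₂,s₂)) = 0. In particular, d is not positive on all pairs of distinct points of 𝓗. -/
open scoped RealInnerProductSpace
open Real

noncomputable section

/-! ### Auxiliary lemmas -/

lemma inner_eVec (f : l2) (n : ℕ) : ⟪f, eVec n⟫ = f n := by
  rw [eVec, lp.inner_single_right]
  simp [RCLike.inner_apply]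

lemma eVec_inner_self (n : ℕ) : ⟪eVec n, eVec n⟫ = 1 := by
  rw [inner_eVec, eVec, lp.single_apply_self]

lemma etaSq_smul_single (c : ℝ) (n : ℕ) : etaSq (c • eVec n) = c^2 / ((n:ℝ)+1) := by
  unfold etaSq
  rw [tsum_eq_single n]
  · simp [lp.coeFn_smul, eVec, lp.single_apply_self]
  · intro b hb
    simp [lp.coeFn_smul, eVec, lp.single_apply_ne _ _ _ hb, Pi.single_apply, hb]

lemma len_nonneg {p q : Hei}
    {L : ℝ} (hL : L ∈ {L | ∃ γ : ℝ → Hei, PiecewiseC1 γ ∧ γ 0 = p ∧ γ 1 = q ∧ lenSigma γ = L}) :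
    0 ≤ L := by
  obtain ⟨γ, -, -, -, rfl⟩ := hL
  exact intervalIntegral.integral_nonneg (by norm_num) (fun t _ => Real.sqrt_nonneg _)

lemma curve_small (p₁ p₂ : l2) (s₁ s₂ : ℝ) (R S : ℝ) (hRS : 2*π*R*S = s₂ - s₁) (n : ℕ) :
    ∃ γ : ℝ → Hei, PiecewiseC1 γ ∧ γ 0 = (p₁, p₂, s₁) ∧ γ 1 = (p₁, p₂, s₂) ∧
      lenSigma γ ≤ 2*π*Real.sqrt (R^2+S^2) / Real.sqrt ((n:ℝ)+1) := by
  set a : ℝ := ⟪p₁, eVec n⟫ with ha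
  set b : ℝ := ⟪p₂, eVec n⟫ with hb
  set x : ℝ → ℝ := fun t => R * Real.sin (2*π*t) with hxdef
  set y : ℝ → ℝ := fun t => S * (1 - Real.cos (2*π*t)) with hydef
  set z : ℝ → ℝ := fun t =>
    s₁ + a*S*(1 - Real.cos (2*π*t)) - (b+S)*R*Real.sin (2*π*t) + 2*π*R*S*t with hzdef
  set x' : ℝ → ℝ := fun t => R * (Real.cos (2*π*t) * (2*π)) with hx'def
  set y' : ℝ → ℝ := fun t => S * (Real.sin (2*π*t) * (2*π)) with hy'def
  set z' : ℝ → ℝ := fun t =>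
    a*S*(Real.sin (2*π*t)*(2*π)) - (b+S)*R*(Real.cos (2*π*t)*(2*π)) + 2*π*R*S with hz'def
  set γ : ℝ → Hei := fun t => (p₁ + x t • eVec n, p₂ + y t • eVec n, z t) with hγdef
  -- derivative facts
  have hsin : ∀ t : ℝ, HasDerivAt (fun t : ℝ => Real.sin (2*π*t)) (Real.cos (2*π*t) * (2*π)) t :=
    fun t => ((hasDerivAt_id t).const_mul (2*π)).sin.congr_deriv (by simp only [id_eq]; ring)
  have hcos : ∀ t : ℝ, HasDerivAt (fun t : ℝ => 1 - Real.cos (2*π*t)) (Real.sin (2*π*t) * (2*π)) t :=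
    fun t => (((hasDerivAt_id t).const_mul (2*π)).cos.const_sub 1).congr_deriv
      (by simp only [id_eq]; ring)
  have hdx : ∀ t : ℝ, HasDerivAt x (x' t) t := fun t => (hsin t).const_mul R
  have hdy : ∀ t : ℝ, HasDerivAt y (y' t) t := fun t => (hcos t).const_mul S
  have hdz : ∀ t : ℝ, HasDerivAt z (z' t) t := by
    intro t
    have h3 : HasDerivAt (fun t : ℝ => 2*π*R*S*t) (2*π*R*S) t :=
      ((hasDerivAt_id t).const_mul (2*π*R*S)).congr_deriv (by ring)
    exact (((((hcos t).const_mul (a*S)).const_add s₁).sub ((hsin t).const_mul ((b+S)*R))).add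
      h3).congr_deriv (by simp only [hz'def])
  have hd : ∀ t : ℝ, HasDerivAt γ (x' t • eVec n, y' t • eVec n, z' t) t := by
    intro t
    refine HasDerivAt.prodMk ?_ (HasDerivAt.prodMk ?_ (hdz t))
    · exact ((hasDerivAt_const t p₁).add ((hdx t).smul_const (eVec n))).congr_deriv (zero_add _)
    · exact ((hasDerivAt_const t p₂).add ((hdy t).smul_const (eVec n))).congr_deriv (zero_add _)
  have hdiff : ∀ t : ℝ, DifferentiableAt ℝ γ t := fun t => (hd t).differentiableAt
  have hderiv : deriv γ = fun t => ((x' t • eVec n, y' t • eVec n, z' t) : Hei) :=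
    funext fun t => (hd t).deriv
  have hcx' : Continuous x' := by
    apply Continuous.mul continuous_const
    exact (Real.continuous_cos.comp (continuous_const.mul continuous_id)).mul continuous_const
  have hcy' : Continuous y' := by
    apply Continuous.mul continuous_const
    exact (Real.continuous_sin.comp (continuous_const.mul continuous_id)).mul continuous_const
  have hcz' : Continuous z' := by
    apply Continuous.add
    apply Continuous.sub
    · exact continuous_const.mul
        ((Real.continuous_sin.comp (continuous_const.mul continuous_id)).mul continuous_const)
    · exact continuous_const.mul
        ((Real.continuous_cos.comp (continuous_const.mul continuous_id)).mul continuous_const)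
    · exact continuous_const
  refine ⟨γ, ⟨fun t _ => (hdiff t).continuousAt.continuousWithinAt, ∅, fun t _ _ =>
    ⟨hdiff t, ?_⟩⟩, ?_, ?_, ?_⟩
  · rw [hderiv]
    exact Continuous.continuousAt (((hcx'.smul continuous_const).prodMk
      ((hcy'.smul continuous_const).prodMk hcz')))
  · simp only [hγdef, hxdef, hydef, hzdef]
    norm_num
  · simp only [hγdef, hxdef, hydef, hzdef]
    rw [mul_one, Real.sin_two_pi, Real.cos_two_pi]
    norm_num
    linarith [hRS]
  · -- length bound
    set M : ℝ := 2*π*Real.sqrt (R^2+S^2) / Real.sqrt ((n:ℝ)+1) with hM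
    have hMnn : 0 ≤ M := by positivity
    have hval : ∀ t : ℝ, sigmaSq (γ t) (deriv γ t)
        = (x' t)^2/((n:ℝ)+1) + (y' t)^2/((n:ℝ)+1) := by
      intro t
      rw [hderiv]
      show etaSq (x' t • eVec n) + etaSq (y' t • eVec n)
        + (z' t - ⟪p₁ + x t • eVec n, y' t • eVec n⟫ + ⟪p₂ + y t • eVec n, x' t • eVec n⟫)^2 = _
      rw [etaSq_smul_single, etaSq_smul_single]
      have h1 : ⟪p₁ + x t • eVec n, y' t • eVec n⟫ = y' t * (a + x t) := by
        rw [real_inner_smul_right, inner_add_left, real_inner_smul_left, eVec_inner_self, ← ha]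
        ring
      have h2 : ⟪p₂ + y t • eVec n, x' t • eVec n⟫ = x' t * (b + y t) := by
        rw [real_inner_smul_right, inner_add_left, real_inner_smul_left, eVec_inner_self, ← hb]
        ring
      rw [h1, h2]
      have hzero : z' t - y' t * (a + x t) + x' t * (b + y t) = 0 := by
        simp only [hz'def, hy'def, hx'def, hxdef, hydef]
        have hsc := Real.sin_sq_add_cos_sq (2*π*t)
        linear_combination (-(2*π*R*S)) * hsc
      rw [hzero]
      ring
    have hbound : ∀ t : ℝ, Real.sqrt (sigmaSq (γ t) (deriv γ t)) ≤ M := by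
      intro t
      rw [hval t]
      have hn1 : (0:ℝ) < (n:ℝ)+1 := by positivity
      have hMsq : M^2 = (2*π)^2 * (R^2+S^2) / ((n:ℝ)+1) := by
        rw [hM, div_pow, mul_pow, Real.sq_sqrt (by positivity : (0:ℝ) ≤ R^2+S^2),
          Real.sq_sqrt (le_of_lt hn1)]
      have hle : (x' t)^2/((n:ℝ)+1) + (y' t)^2/((n:ℝ)+1) ≤ M^2 := by
        rw [hMsq, ← add_div]
        have h1 := Real.sin_sq_le_one (2*π*t)
        have h2 := Real.cos_sq_le_one (2*π*t)
        gcongr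
        simp only [hx'def, hy'def]
        nlinarith [mul_nonneg (mul_nonneg (sq_nonneg π) (sq_nonneg R)) (sub_nonneg.2 h2),
          mul_nonneg (mul_nonneg (sq_nonneg π) (sq_nonneg S)) (sub_nonneg.2 h1)]
      calc Real.sqrt ((x' t)^2/((n:ℝ)+1) + (y' t)^2/((n:ℝ)+1)) ≤ Real.sqrt (M^2) :=
            Real.sqrt_le_sqrt hle
        _ = M := Real.sqrt_sq hMnn
    unfold lenSigma
    have hint : IntervalIntegrable (fun t => Real.sqrt (sigmaSq (γ t) (deriv γ t)))
        MeasureTheory.volume 0 1 := by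
      have : Continuous fun t => Real.sqrt (sigmaSq (γ t) (deriv γ t)) := by
        have : (fun t => Real.sqrt (sigmaSq (γ t) (deriv γ t)))
            = fun t => Real.sqrt ((x' t)^2/((n:ℝ)+1) + (y' t)^2/((n:ℝ)+1)) :=
          funext fun t => by rw [hval t]
        rw [this]
        exact Real.continuous_sqrt.comp
          (((hcx'.pow 2).div_const _).add ((hcy'.pow 2).div_const _))
      exact this.intervalIntegrable 0 1
    calc (∫ t in (0:ℝ)..1, Real.sqrt (sigmaSq (γ t) (deriv γ t)))
        ≤ ∫ _ in (0:ℝ)..1, M := by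
          refine intervalIntegral.integral_mono_on (by norm_num) hint
            intervalIntegrable_const (fun t _ => hbound t)
      _ = M := by simp

lemma dSigma_same (p₁ p₂ : l2) (s₁ s₂ : ℝ) : dSigma (p₁, p₂, s₁) (p₁, p₂, s₂) = 0 := by
  set c : ℝ := s₂ - s₁ with hc
  set R : ℝ := Real.sqrt (|c|/(2*π)) with hR
  set S : ℝ := if 0 ≤ c then R else -R with hS
  have hπ := Real.pi_pos
  have hRR : R * R = |c|/(2*π) := Real.mul_self_sqrt (by positivity)
  have hRS : 2*π*R*S = s₂ - s₁ := by
    rw [hS]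
    split_ifs with h
    · have : 2*π*R*R = |c| := by rw [mul_assoc, hRR]; field_simp
      rw [mul_assoc, hRR]
      rw [abs_of_nonneg h] at this ⊢
      · rw [← hc]; field_simp
    · push_neg at h
      rw [← hc]
      have : 2*π*(R*R) = |c| := by rw [hRR]; field_simp
      rw [abs_of_neg h] at this
      nlinarith [this]
  set K : ℝ := 2*π*Real.sqrt (R^2+S^2) with hK
  have hKnn : 0 ≤ K := by positivity
  have hbdd : BddBelow {L | ∃ γ : ℝ → Hei, PiecewiseC1 γ ∧ γ 0 = (p₁, p₂, s₁) ∧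
      γ 1 = (p₁, p₂, s₂) ∧ lenSigma γ = L} := ⟨0, fun L hL => len_nonneg hL⟩
  apply le_antisymm
  · apply le_of_forall_pos_le_add
    intro ε hε
    rw [zero_add]
    obtain ⟨n, hn⟩ := exists_nat_gt ((K/ε)^2)
    obtain ⟨γ, hpc, h0, h1, hlen⟩ := curve_small p₁ p₂ s₁ s₂ R S hRS n
    have hmem : lenSigma γ ∈ {L | ∃ γ : ℝ → Hei, PiecewiseC1 γ ∧ γ 0 = (p₁, p₂, s₁) ∧
        γ 1 = (p₁, p₂, s₂) ∧ lenSigma γ = L} := ⟨γ, hpc, h0, h1, rfl⟩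
    have hsq : (0:ℝ) < Real.sqrt ((n:ℝ)+1) := Real.sqrt_pos.2 (by positivity)
    have hKε : K / Real.sqrt ((n:ℝ)+1) ≤ ε := by
      rw [div_le_iff₀ hsq]
      have hs2 : (Real.sqrt ((n:ℝ)+1))^2 = (n:ℝ)+1 := Real.sq_sqrt (by positivity)
      have hKsq : K^2 < ε^2 * ((n:ℝ)+1) := by
        have : (K/ε)^2 < (n:ℝ)+1 := lt_of_lt_of_le hn (by norm_num)
        rw [div_pow] at this
        calc K^2 = (K^2/ε^2) * ε^2 := by field_simp
          _ < ((n:ℝ)+1) * ε^2 := by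
              apply mul_lt_mul_of_pos_right this (by positivity)
          _ = ε^2 * ((n:ℝ)+1) := by ring
      nlinarith [mul_pos hε hsq, hKnn, Real.sqrt_nonneg ((n:ℝ)+1)]
    exact le_trans (csInf_le hbdd hmem) (le_trans hlen hKε)
  · obtain ⟨γ, hpc, h0, h1, _⟩ := curve_small p₁ p₂ s₁ s₂ R S hRS 0
    exact le_csInf ⟨lenSigma γ, γ, hpc, h0, h1, rfl⟩ (fun L hL => len_nonneg hL)

/-- The Riemannian geodesic distance `d` vanishes between points with the same
horizontal projection; in particular `d` is not positive on all pairs of distinct points. -/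
theorem statement2 :
    (∀ (p₁ p₂ : l2) (s₁ s₂ : ℝ), dSigma (p₁, p₂, s₁) (p₁, p₂, s₂) = 0) ∧
    ¬ (∀ p q : Hei, p ≠ q → 0 < dSigma p q) := by
  refine ⟨dSigma_same, fun h => ?_⟩
  have h0 := dSigma_same 0 0 0 1
  have h1 := h (0, 0, 0) (0, 0, 1) (by simp [Prod.ext_iff])
  rw [h0] at h1
  exact lt_irrefl 0 h1

end
end

section
/- Let Y = (Y¹, Y², Y³) ∈ ℓ²×ℓ²×ℝ and assume that the sequences (j·Y¹_j)_{j≥1} and (j·Y²_j)_{j≥1} belong to ℓ². Then the adjoint B_σ(e³,Y) = ad(Y)*(e³) with respect to σ₀ exists and is given by B_σ(e³,Y) = ((−2j·Y²_j)_{j≥1}, (2j·Y¹_j)_{j≥1}, 0), i.e. B_σ(e³,Y) = 2 Σ_{j≥1} j (Y¹_j e²_j − Y²_j e¹_j); that is, this element B satisfies σ₀([Y,Z], e³) = σ₀(Z, B) for all Z ∈ ℓ²×ℓ²×ℝ. -/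
open scoped RealInnerProductSpace
open Real

noncomputable section

/-- If `(j·Y¹_j)` and `(j·Y²_j)` are square-summable then the adjoint `B_σ(e³,Y)`
exists and equals `2 Σ_j j (Y¹_j e²_j − Y²_j e¹_j)`. -/
theorem statement15 (Y : Hei)
    (h1 : Memℓp (fun j : ℕ => ((j : ℝ) + 1) * Y.1 j) 2)
    (h2 : Memℓp (fun j : ℕ => ((j : ℝ) + 1) * Y.2.1 j) 2) :
    ∃ B : Hei,
      (∀ j : ℕ, B.1 j = -(2 * ((j : ℝ) + 1) * Y.2.1 j)) ∧
      (∀ j : ℕ, B.2.1 j = 2 * ((j : ℝ) + 1) * Y.1 j) ∧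
      B.2.2 = 0 ∧
      ∀ Z : Hei, sigma0 (bracket Y Z) e3 = sigma0 Z B := by
  have hm1 : Memℓp (fun j : ℕ => -(2 * ((j : ℝ) + 1) * Y.2.1 j)) 2 := by
    have := (h2.const_mul (-2)); simpa [mul_assoc] using this
  have hm2 : Memℓp (fun j : ℕ => 2 * ((j : ℝ) + 1) * Y.1 j) 2 := by
    have := (h1.const_mul 2); simpa [mul_assoc] using this
  refine ⟨(⟨_, hm1⟩, ⟨_, hm2⟩, 0), fun j => rfl, fun j => rfl, rfl, ?_⟩
  intro Z
  have hinner : ∀ f g : l2, ⟪f, g⟫ = ∑' k, f k * g k := fun f g => by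
    rw [lp.inner_eq_tsum]; simp [RCLike.inner_apply]
    exact tsum_congr fun _ => mul_comm _ _
  have hsum : ∀ f g : l2, Summable fun k => f k * g k := fun f g => by
    have := lp.summable_inner (𝕜 := ℝ) f g
    exact (by simpa [RCLike.inner_apply] using this : Summable fun i => g i * f i).congr
      fun _ => mul_comm _ _
  have key : ∀ k : ℕ,
      (Z.1 k * (-(2 * ((k : ℝ) + 1) * Y.2.1 k))
        + Z.2.1 k * (2 * ((k : ℝ) + 1) * Y.1 k)) / ((k : ℝ) + 1)
      = 2 * (Y.1 k * Z.2.1 k) - 2 * (Y.2.1 k * Z.1 k) := by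
    intro k
    have hk : ((k : ℝ) + 1) ≠ 0 := by positivity
    field_simp
    ring
  simp only [sigma0, bracket, e3]
  have hz : (∑' k : ℕ, (((0 : l2) k) * ((0 : l2) k)
      + ((0 : l2) k) * ((0 : l2) k)) / ((k : ℝ) + 1)) = 0 := by
    simp
  rw [hz]
  have hrw : (∑' k : ℕ, (Z.1 k * (-(2 * ((k : ℝ) + 1) * Y.2.1 k))
      + Z.2.1 k * (2 * ((k : ℝ) + 1) * Y.1 k)) / ((k : ℝ) + 1))
      = ∑' k : ℕ, (2 * (Y.1 k * Z.2.1 k) - 2 * (Y.2.1 k * Z.1 k)) := by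
    exact tsum_congr key
  have hs1 : Summable fun k : ℕ => 2 * (Y.1 k * Z.2.1 k) :=
    (hsum Y.1 Z.2.1).mul_left 2
  have hs2 : Summable fun k : ℕ => 2 * (Y.2.1 k * Z.1 k) :=
    (hsum Y.2.1 Z.1).mul_left 2
  show (0 + 2 * (⟪Y.1, Z.2.1⟫ - ⟪Y.2.1, Z.1⟫) * 1) = _
  rw [hrw, Summable.tsum_sub hs1 hs2, hinner, hinner,
    tsum_mul_left, tsum_mul_left]
  ring

end
end

section
/- Let W = (Σ_{j≥1} e_j/j, 0, 0) ∈ ℓ²×ℓ²×ℝ, i.e. W¹_j = 1/j for all j and W² = 0, W³ = 0. Then the adjoint B_σ(e³,W) = ad(W)*(e³) with respect to σ₀ does not exist: there is no element B ∈ ℓ²×ℓ²×ℝ satisfying σ₀([W,Z], e³) = σ₀(Z, B) for all Z ∈ ℓ²×ℓ²×ℝ. Consequently the Arnold sectional curvature K_σ(e³, W) cannot be defined. -/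
open scoped RealInnerProductSpace
open Real

noncomputable section

/-- For `W = (Σ_j e_j/j, 0, 0)` the adjoint `B_σ(e³,W) = ad(W)*(e³)` does not exist. -/
theorem statement16 (W : Hei)
    (hW1 : ∀ j : ℕ, W.1 j = 1 / ((j : ℝ) + 1))
    (hW2 : W.2.1 = 0) (hW3 : W.2.2 = 0) :
    ¬ ∃ B : Hei, ∀ Z : Hei, sigma0 (bracket W Z) e3 = sigma0 Z B := by
  rintro ⟨B, hB⟩
  have key : ∀ n : ℕ, B.2.1 n = 2 := by
    intro n
    have h := hB (0, eVec n, 0)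
    have hL : sigma0 (bracket W (0, eVec n, 0)) e3 = 2 / ((n : ℝ) + 1) := by
      simp only [bracket, sigma0, e3, hW2, eVec]
      rw [lp.inner_single_right]
      simp only [lp.coeFn_zero, Pi.zero_apply, zero_mul, mul_zero, add_zero, zero_div,
        tsum_zero, inner_zero_left, mul_one, zero_add, sub_zero]
      have : ⟪W.1 n, (1:ℝ)⟫ = 1 / ((n : ℝ) + 1) := by
        simp [RCLike.inner_apply, hW1 n]
      rw [this]; ring
    have hR : sigma0 ((0 : l2), eVec n, (0:ℝ)) B = B.2.1 n / ((n : ℝ) + 1) := by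
      simp only [sigma0, lp.coeFn_zero, Pi.zero_apply, zero_mul, zero_add, mul_zero, add_zero]
      have hterm : ∀ k : ℕ, eVec n k * B.2.1 k / ((k : ℝ) + 1)
          = if k = n then B.2.1 n / ((n : ℝ) + 1) else 0 := by
        intro k
        by_cases hk : k = n
        · subst hk; simp [eVec, lp.single_apply_self]
        · simp [eVec, lp.single_apply_ne _ _ _ hk, hk]
      calc (∑' k : ℕ, eVec n k * B.2.1 k / ((k : ℝ) + 1))
          = ∑' k : ℕ, if k = n then B.2.1 n / ((n : ℝ) + 1) else 0 := by
            exact tsum_congr hterm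
        _ = B.2.1 n / ((n : ℝ) + 1) := tsum_ite_eq n _
    rw [hL, hR] at h
    have hpos : ((n : ℝ) + 1) ≠ 0 := by positivity
    field_simp at h
    linarith
  have hmem : Memℓp (B.2.1 : ∀ _ : ℕ, ℝ) 2 := lp.memℓp B.2.1
  have hsum : Summable fun k : ℕ => ‖B.2.1 k‖ ^ (2 : ENNReal).toReal := by
    rw [← memℓp_gen_iff (by norm_num)]
    exact hmem
  have : Summable fun _ : ℕ => ((2:ℝ)) ^ (2 : ENNReal).toReal := by
    have := hsum
    simpa [key, Real.norm_eq_abs] using this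
  have h2 : ((2:ℝ)) ^ (2 : ENNReal).toReal = 0 := by
    exact (summable_const_iff ((2:ℝ) ^ (2 : ENNReal).toReal)).mp this
  rw [ENNReal.toReal_ofNat] at h2
  norm_num at h2

end
end

section
/- For every integer k ≥ 1 let W_k = (Σ_{j=1}^k j⁻³)^{−1/2} (Σ_{j=1}^k e_j/j, 0, 0) ∈ ℓ²×ℓ²×ℝ, a unit vector for σ₀ orthogonal to e³. Then: (i) the element B_k = 2(Σ_{j=1}^k j⁻³)^{−1/2} (0, Σ_{j=1}^k e_j, 0) satisfies σ₀([W_k,Z], e³) = σ₀(Z, B_k) for all Z, i.e. B_k = B_σ(e³,W_k); (ii) σ₀([e³,Z], W_k) = 0 for all Z, i.e. B_σ(W_k,e³) = 0; (iii) therefore Arnold's sectional curvature of the plane spanned by W_k and e³ equals K_σ(W_k,e³) = (1/4)σ₀(B_k,B_k) = (Σ_{j=1}^k j⁻³)^{−1} Σ_{j=1}^k j⁻¹, and K_σ(W_k,e³) → +∞ as k → ∞. -/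
open scoped RealInnerProductSpace
open Real

noncomputable section

/-- `Σ_{j=1}^k j⁻³`. -/
def sumCube (k : ℕ) : ℝ := ∑ j ∈ Finset.range k, 1 / ((j : ℝ) + 1)^3

/-- `W_k = (Σ_{j=1}^k j⁻³)^{-1/2} Σ_{j=1}^k e¹_j/j`. -/
def Wk (k : ℕ) : Hei :=
  (Real.sqrt (sumCube k))⁻¹ •
    (((∑ j ∈ Finset.range k, (1 / ((j : ℝ) + 1)) • eVec j), 0, 0) : Hei)

/-- `B_k = 2 (Σ_{j=1}^k j⁻³)^{-1/2} Σ_{j=1}^k e²_j`. -/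
def Bk (k : ℕ) : Hei :=
  (2 * (Real.sqrt (sumCube k))⁻¹) • ((0, ∑ j ∈ Finset.range k, eVec j, 0) : Hei)

-- helpers
lemma eVec_apply (j n : ℕ) : eVec j n = if n = j then 1 else 0 := by
  rcases eq_or_ne n j with h | h
  · simp [eVec, h, lp.single_apply_self]
  · simp [eVec, lp.single_apply_ne 2 j _ h, h]

lemma x0_apply (k n : ℕ) :
    (∑ j ∈ Finset.range k, ((1:ℝ) / ((j : ℝ) + 1)) • eVec j) n
      = if n < k then 1 / ((n:ℝ)+1) else 0 := by
  rw [lp.coeFn_sum, Finset.sum_apply]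
  have : ∀ j ∈ Finset.range k, (((1:ℝ) / ((j : ℝ) + 1)) • eVec j) n
      = if n = j then 1 / ((n:ℝ)+1) else 0 := by
    intro j _
    rw [lp.coeFn_smul, Pi.smul_apply, eVec_apply, smul_eq_mul]
    split_ifs with h
    · subst h; ring
    · ring
  rw [Finset.sum_congr rfl this, Finset.sum_ite_eq (Finset.range k) n]
  simp [Finset.mem_range]

lemma y0_apply (k n : ℕ) :
    (∑ j ∈ Finset.range k, eVec j) n = if n < k then 1 else 0 := by
  rw [lp.coeFn_sum, Finset.sum_apply]
  have : ∀ j ∈ Finset.range k, eVec j n = if n = j then (1:ℝ) else 0 := fun j _ => eVec_apply j n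
  rw [Finset.sum_congr rfl this, Finset.sum_ite_eq (Finset.range k) n]
  simp [Finset.mem_range]

lemma Wk_fst (k n : ℕ) :
    (Wk k).1 n = (Real.sqrt (sumCube k))⁻¹ * (if n < k then 1 / ((n:ℝ)+1) else 0) := by
  simp only [Wk, Prod.smul_fst]
  rw [lp.coeFn_smul, Pi.smul_apply, smul_eq_mul, x0_apply]

lemma Wk_snd1 (k : ℕ) : (Wk k).2.1 = 0 := by simp [Wk]
lemma Wk_snd2 (k : ℕ) : (Wk k).2.2 = 0 := by simp [Wk]

lemma Bk_fst (k : ℕ) : (Bk k).1 = 0 := by simp [Bk]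
lemma Bk_snd2 (k : ℕ) : (Bk k).2.2 = 0 := by simp [Bk]
lemma Bk_snd1 (k n : ℕ) :
    (Bk k).2.1 n = 2 * (Real.sqrt (sumCube k))⁻¹ * (if n < k then 1 else 0) := by
  simp only [Bk, Prod.smul_snd, Prod.smul_fst]
  rw [lp.coeFn_smul, Pi.smul_apply, smul_eq_mul, y0_apply]

lemma sumCube_pos {k : ℕ} (hk : 1 ≤ k) : 0 < sumCube k := by
  apply Finset.sum_pos
  · intro i _; positivity
  · exact Finset.nonempty_range_iff.mpr (by omega)

lemma inner_l2 (f g : l2) : ⟪f, g⟫ = ∑' n, f n * g n := by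
  rw [lp.inner_eq_tsum]; exact tsum_congr fun n => by simp [mul_comm]

lemma sumCube_le (m : ℕ) : sumCube (m+1) ≤ 2 - 1/((m:ℝ)+1) := by
  induction m with
  | zero => norm_num [sumCube]
  | succ n ih =>
    have hstep : sumCube (n+2) = sumCube (n+1) + 1/(((n:ℝ)+1)+1)^3 := by
      rw [sumCube, Finset.sum_range_succ, ← sumCube]
      push_cast; ring_nf
    have key : 1/((n:ℝ)+1+1)^3 ≤ 1/((n:ℝ)+1) - 1/((n:ℝ)+1+1) := by
      have hn : (0:ℝ) ≤ (n:ℝ) := Nat.cast_nonneg n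
      rw [div_sub_div _ _ (by positivity) (by positivity), div_le_div_iff₀ (by positivity) (by positivity)]
      nlinarith [hn, mul_nonneg hn hn, mul_nonneg (mul_nonneg hn hn) hn]
    push_cast
    rw [hstep] at *
    push_cast at *
    linarith

/-- `W_k` is a `σ₀`-unit vector orthogonal to `e³`; `B_σ(e³,W_k) = B_k`,
`B_σ(W_k,e³) = 0`, and the sectional curvature
`K_σ(W_k,e³) = (1/4)σ₀(B_k,B_k) = (Σ_{j=1}^k j⁻³)⁻¹ Σ_{j=1}^k j⁻¹ → +∞`. -/
theorem statement17 (k : ℕ) (hk : 1 ≤ k) :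
    sigma0 (Wk k) (Wk k) = 1 ∧ sigma0 (Wk k) e3 = 0 ∧
    (∀ Z : Hei, sigma0 (bracket (Wk k) Z) e3 = sigma0 Z (Bk k)) ∧
    (∀ Z : Hei, sigma0 (bracket e3 Z) (Wk k) = 0) ∧
    (1/4) * sigma0 (Bk k) (Bk k)
      = (sumCube k)⁻¹ * ∑ j ∈ Finset.range k, 1 / ((j : ℝ) + 1) ∧
    Filter.Tendsto
      (fun m : ℕ => (sumCube m)⁻¹ * ∑ j ∈ Finset.range m, 1 / ((j : ℝ) + 1))
      Filter.atTop Filter.atTop := by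
  have hpos := sumCube_pos hk
  set s : ℝ := Real.sqrt (sumCube k) with hs
  have hs2 : s ^ 2 = sumCube k := Real.sq_sqrt hpos.le
  have hsne : s ≠ 0 := by positivity
  refine ⟨?_, ?_, ?_, ?_, ?_, ?_⟩
  · -- unit norm
    unfold sigma0
    rw [Wk_snd1, Wk_snd2]
    have h1 : (∑' n : ℕ, ((Wk k).1 n * (Wk k).1 n + ((0:l2) n) * ((0:l2) n)) / ((n:ℝ)+1))
        = ∑ n ∈ Finset.range k, s⁻¹ * s⁻¹ * (1/((n:ℝ)+1))^3 := by
      rw [tsum_eq_sum (s := Finset.range k)]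
      · apply Finset.sum_congr rfl
        intro n hn
        rw [Finset.mem_range] at hn
        rw [Wk_fst, if_pos hn]
        simp only [lp.coeFn_zero, Pi.zero_apply, mul_zero, add_zero, zero_mul]
        ring
      · intro n hn
        rw [Finset.mem_range, not_lt] at hn
        rw [Wk_fst, if_neg (by omega)]
        simp
    have h2 : (∑ n ∈ Finset.range k, (1/((n:ℝ)+1))^3) = sumCube k := by
      unfold sumCube
      exact Finset.sum_congr rfl fun n _ => by rw [div_pow, one_pow]
    rw [h1, ← Finset.mul_sum, h2, mul_zero, add_zero, ← hs2, sq]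
    field_simp
  · -- orthogonal to e3
    unfold sigma0 e3
    rw [Wk_snd1, Wk_snd2]
    simp
  · -- B_sigma(e3, Wk) = Bk
    intro Z
    unfold sigma0 bracket e3
    simp only [lp.coeFn_zero, Pi.zero_apply, zero_mul, mul_zero, add_zero, zero_add,
      zero_div, tsum_zero, mul_one, Bk_fst, Bk_snd2]
    rw [Wk_snd1, inner_l2, inner_l2]
    simp only [lp.coeFn_zero, Pi.zero_apply, zero_mul, tsum_zero, sub_zero]
    have hL : (∑' n : ℕ, (Wk k).1 n * Z.2.1 n)
        = ∑ n ∈ Finset.range k, s⁻¹ * (1/((n:ℝ)+1)) * Z.2.1 n := by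
      rw [tsum_eq_sum (s := Finset.range k)]
      · apply Finset.sum_congr rfl; intro n hn
        rw [Finset.mem_range] at hn
        rw [Wk_fst, if_pos hn]
      · intro n hn
        rw [Finset.mem_range, not_lt] at hn
        rw [Wk_fst, if_neg (by omega)]
        simp
    have hR : (∑' n : ℕ, Z.2.1 n * (Bk k).2.1 n / ((n:ℝ)+1))
        = ∑ n ∈ Finset.range k, Z.2.1 n * (2 * s⁻¹) / ((n:ℝ)+1) := by
      rw [tsum_eq_sum (s := Finset.range k)]
      · apply Finset.sum_congr rfl; intro n hn
        rw [Finset.mem_range] at hn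
        rw [Bk_snd1, if_pos hn]
        simp [hs]
      · intro n hn
        rw [Finset.mem_range, not_lt] at hn
        rw [Bk_snd1, if_neg (by omega)]
        simp
    rw [hL, hR, Finset.mul_sum]
    apply Finset.sum_congr rfl
    intro n _
    ring
  · -- B_sigma(Wk, e3) = 0
    intro Z
    unfold sigma0 bracket e3
    simp [Wk_snd2]
  · -- curvature value
    unfold sigma0
    rw [Bk_fst, Bk_snd2]
    have h1 : (∑' n : ℕ, (((0:l2) n) * ((0:l2) n) + (Bk k).2.1 n * (Bk k).2.1 n) / ((n:ℝ)+1))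
        = ∑ n ∈ Finset.range k, (2*s⁻¹)*(2*s⁻¹) * (1/((n:ℝ)+1)) := by
      rw [tsum_eq_sum (s := Finset.range k)]
      · apply Finset.sum_congr rfl; intro n hn
        rw [Finset.mem_range] at hn
        rw [Bk_snd1, if_pos hn]
        simp only [lp.coeFn_zero, Pi.zero_apply, zero_mul, zero_add, mul_one]
        ring
      · intro n hn
        rw [Finset.mem_range, not_lt] at hn
        rw [Bk_snd1, if_neg (by omega)]
        simp
    have hinv : s⁻¹ * s⁻¹ = (sumCube k)⁻¹ := by
      rw [← hs2, sq, mul_inv]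
    rw [h1, ← Finset.mul_sum, mul_zero, add_zero, ← hinv]
    ring
  · -- tendsto
    have hdiv := Real.tendsto_sum_range_one_div_nat_succ_atTop
    apply Filter.tendsto_atTop_mono' _ _ (hdiv.const_mul_atTop (show (0:ℝ) < 2⁻¹ by norm_num))
    filter_upwards [Filter.eventually_ge_atTop 1] with m hm
    have hpos' : 0 < sumCube m := sumCube_pos hm
    have hle : sumCube m ≤ 2 := by
      obtain ⟨n, rfl⟩ := Nat.exists_eq_add_of_le hm
      have := sumCube_le n
      have h0 : (0:ℝ) < 1/((n:ℝ)+1) := by positivity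
      calc sumCube (1+n) = sumCube (n+1) := by rw [Nat.add_comm]
        _ ≤ 2 - 1/((n:ℝ)+1) := sumCube_le n
        _ ≤ 2 := by linarith
    have hinv : (2:ℝ)⁻¹ ≤ (sumCube m)⁻¹ := by
      apply inv_anti₀ hpos' hle
    have hH : 0 ≤ ∑ j ∈ Finset.range m, 1/((j:ℝ)+1) := by
      apply Finset.sum_nonneg; intro j _; positivity
    exact mul_le_mul_of_nonneg_right hinv hH


end
end
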